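/- Let θ ∈ ℝ^{p̃^d} and let P = {A, B} be a bipartition of {1,…,d}. Let {ψ_i}_{i=1}^{p̃} be linearly independent. Then the separation rank of f^θ with respect to P (the minimal r such that f^θ = ∑_{j=1}^r u_j · w_j with u_j depending only on variables indexed by A and w_j only on variables indexed by B, each in the respective span of products of ψ's) equals the rank of the matricization of θ obtained by grouping the indices in A as rows and the indices in B as columns. -/

import Mathlib

/-- The matricization of a tensor `θ ∈ ℝ^{p^d}` with respect to the bipartition
`{A, Aᶜ}` of the legs: indices in `A` become rows, indices in `Aᶜ` become columns. -/
def matricize (p d : ℕ) (A : Finset (Fin d)) (θ : (Fin d → Fin p) → ℝ) :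
    Matrix (↥A → Fin p) (↥Aᶜ → Fin p) ℝ :=
  fun a b => θ (fun i => if h : i ∈ A then a ⟨i, h⟩ else b ⟨i, Finset.mem_compl.mpr h⟩)

lemma aux_dual {p : ℕ} (ψ : Fin p → ℝ → ℝ) (hψ : LinearIndependent ℝ ψ) :
    ∃ (fs : Finset ℝ) (G : Matrix (Fin p) ↥fs ℝ),
      ∀ k i : Fin p, ∑ j : ↥fs, G k j * ψ i j = (1 : Matrix (Fin p) (Fin p) ℝ) k i := by
  classical
  set e : ℝ → ((Fin p → ℝ) →ₗ[ℝ] ℝ) := fun x => ∑ i, (ψ i x) • LinearMap.proj i with he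
  have he' : ∀ x c, e x c = ∑ i, ψ i x * c i := by
    intro x c; simp [he, LinearMap.sum_apply]
  set K : ℝ → Submodule ℝ (Fin p → ℝ) := fun x => LinearMap.ker (e x) with hK
  have hbot : ∀ c : Fin p → ℝ, (∀ x, c ∈ K x) → c = 0 := by
    intro c hc
    have h0 : ∑ i, c i • ψ i = 0 := by
      funext x
      have hx := hc x
      rw [hK, LinearMap.mem_ker] at hx
      rw [he'] at hx
      simpa [Finset.sum_apply, mul_comm] using hx
    exact funext (Fintype.linearIndependent_iff.mp hψ c h0)
  obtain ⟨N, ⟨fs, rfl⟩, hmin⟩ := (wellFounded_lt (α := Submodule ℝ (Fin p → ℝ))).has_min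
      (Set.range fun fs : Finset ℝ => ⨅ x ∈ fs, K x) ⟨⊤, ∅, by simp⟩
  have hle : ∀ x, (⨅ y ∈ fs, K y) ≤ K x := by
    intro x
    have h1 : (⨅ y ∈ insert x fs, K y) = K x ⊓ ⨅ y ∈ fs, K y := by
      rw [Finset.iInf_insert]
    have h2 : (⨅ y ∈ insert x fs, K y) ≤ ⨅ y ∈ fs, K y := by
      rw [h1]; exact inf_le_right
    have h3 : ¬ (⨅ y ∈ insert x fs, K y) < ⨅ y ∈ fs, K y :=
      hmin _ ⟨insert x fs, rfl⟩
    have h4 : (⨅ y ∈ insert x fs, K y) = ⨅ y ∈ fs, K y :=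
      h2.lt_or_eq.resolve_left h3
    calc (⨅ y ∈ fs, K y) = K x ⊓ ⨅ y ∈ fs, K y := by rw [← h1, h4]
      _ ≤ K x := inf_le_left
  have hker : (⨅ y ∈ fs, K y) = ⊥ := by
    rw [eq_bot_iff]
    intro c hc
    have : ∀ x, c ∈ K x := fun x => hle x hc
    simp [hbot c this]
  set E : (Fin p → ℝ) →ₗ[ℝ] (↥fs → ℝ) := LinearMap.pi (fun j => e j.val) with hE
  have hEker : LinearMap.ker E = ⊥ := by
    rw [eq_bot_iff]
    intro c hc
    rw [LinearMap.mem_ker] at hc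
    have : c ∈ ⨅ y ∈ fs, K y := by
      simp only [Submodule.mem_iInf]
      intro y hy
      rw [hK, LinearMap.mem_ker]
      exact congrFun hc ⟨y, hy⟩
    rw [hker] at this
    exact this
  obtain ⟨g, hg⟩ := E.exists_leftInverse_of_injective hEker
  refine ⟨fs, fun k j => g (Pi.single j 1) k, ?_⟩
  intro k i
  have h1 : E (Pi.single i 1) = fun j : ↥fs => ψ i ↑j := by
    funext j
    rw [hE]
    simp only [LinearMap.pi_apply]
    rw [he']
    simp [Pi.single_apply]
  have h2 : g (fun j : ↥fs => ψ i ↑j) = Pi.single i 1 := by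
    rw [← h1]
    exact LinearMap.congr_fun hg (Pi.single i 1)
  have h3 : (fun j : ↥fs => ψ i ↑j) = ∑ j : ↥fs, ψ i ↑j • (Pi.single j 1 : ↥fs → ℝ) := by
    funext j'
    simp [Pi.single_apply]
  have h4 : g (fun j : ↥fs => ψ i ↑j) = ∑ j : ↥fs, ψ i ↑j • g (Pi.single j 1) := by
    rw [h3, map_sum]
    simp only [map_smul]
  have h5 := congrFun (h4.symm.trans h2) k
  simp only [Finset.sum_apply, Pi.smul_apply, smul_eq_mul] at h5
  calc ∑ j : ↥fs, g (Pi.single j 1) k * ψ i ↑j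
      = ∑ j : ↥fs, ψ i ↑j * g (Pi.single j 1) k := by
        exact Finset.sum_congr rfl fun j _ => mul_comm _ _
    _ = (Pi.single i 1 : Fin p → ℝ) k := h5
    _ = (1 : Matrix (Fin p) (Fin p) ℝ) k i := by
        simp [Matrix.one_apply, Pi.single_apply]

lemma grid_mul {ι κ₁ κ₂ κ₃ : Type*} [Fintype ι] [DecidableEq ι] [Fintype κ₂]
    (P : Matrix κ₁ κ₂ ℝ) (Q : Matrix κ₂ κ₃ ℝ) :
    (Matrix.of fun (a : ι → κ₁) (b : ι → κ₂) => ∏ i, P (a i) (b i)) *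
      (Matrix.of fun (b : ι → κ₂) (c : ι → κ₃) => ∏ i, Q (b i) (c i)) =
      Matrix.of fun (a : ι → κ₁) (c : ι → κ₃) => ∏ i, (P * Q) (a i) (c i) := by
  ext a c
  simp only [Matrix.mul_apply, Matrix.of_apply, ← Finset.prod_mul_distrib]
  rw [Fintype.prod_sum (fun i j => P (a i) j * Q j (c i))]

lemma grid_one {ι κ : Type*} [Fintype ι] [Fintype κ] [DecidableEq κ] :
    (Matrix.of fun (a b : ι → κ) => ∏ i, (1 : Matrix κ κ ℝ) (a i) (b i))
      = (1 : Matrix (ι → κ) (ι → κ) ℝ) := by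
  ext a b
  simp only [Matrix.of_apply, Matrix.one_apply]
  by_cases h : a = b
  · subst h; simp
  · rw [if_neg h]
    obtain ⟨i, hi⟩ := Function.ne_iff.mp h
    exact Finset.prod_eq_zero (Finset.mem_univ i) (if_neg hi)

lemma sum_comm3 {α β γ : Type*} [Fintype α] [Fintype β] [Fintype γ] (f : α → β → γ → ℝ) :
    ∑ a, ∑ b, ∑ j, f a b j = ∑ j, ∑ a, ∑ b, f a b j :=
  calc ∑ a, ∑ b, ∑ j, f a b j
      = ∑ a, ∑ j, ∑ b, f a b j := Finset.sum_congr rfl fun _ _ => Finset.sum_comm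
    _ = ∑ j, ∑ a, ∑ b, f a b j := Finset.sum_comm

lemma aux_key (p d : ℕ) (ψ : Fin p → ℝ → ℝ) (A : Finset (Fin d))
    (θ : (Fin d → Fin p) → ℝ) (x : Fin d → ℝ) :
    (∑ idx : Fin d → Fin p, θ idx * ∏ k : Fin d, ψ (idx k) (x k)) =
    ∑ a : ↥A → Fin p, ∑ b : ↥Aᶜ → Fin p,
      matricize p d A θ a b *
        ((∏ i : ↥A, ψ (a i) (x i)) * ∏ i : ↥Aᶜ, ψ (b i) (x i)) := by
  classical
  let glue : (↥A → Fin p) → (↥Aᶜ → Fin p) → (Fin d → Fin p) := fun a b i =>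
    if h : i ∈ A then a ⟨i, h⟩ else b ⟨i, Finset.mem_compl.mpr h⟩
  let e : ((↥A → Fin p) × (↥Aᶜ → Fin p)) ≃ (Fin d → Fin p) :=
    { toFun := fun ab => glue ab.1 ab.2
      invFun := fun idx => (fun i => idx i, fun i => idx i)
      left_inv := by
        rintro ⟨a, b⟩
        refine Prod.ext ?_ ?_ <;> funext i
        · exact dif_pos i.prop
        · exact dif_neg (Finset.mem_compl.mp i.prop)
      right_inv := by
        intro idx; funext i
        by_cases h : i ∈ A
        · exact dif_pos h
        · exact dif_neg h }
  rw [← Equiv.sum_comp e (fun idx => θ idx * ∏ k : Fin d, ψ (idx k) (x k)),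
    Fintype.sum_prod_type]
  refine Finset.sum_congr rfl fun a _ => Finset.sum_congr rfl fun b _ => ?_
  have h2 : (∏ k : Fin d, ψ (glue a b k) (x k))
      = (∏ i : ↥A, ψ (a i) (x i)) * ∏ i : ↥Aᶜ, ψ (b i) (x i) := by
    rw [← Finset.prod_mul_prod_compl A (fun k => ψ (glue a b k) (x k))]
    congr 1
    · rw [← Finset.prod_coe_sort A (fun k => ψ (glue a b k) (x k))]
      exact Finset.prod_congr rfl fun i _ => by rw [show glue a b ↑i = a i from dif_pos i.prop]
    · rw [← Finset.prod_coe_sort Aᶜ (fun k => ψ (glue a b k) (x k))]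
      exact Finset.prod_congr rfl fun i _ => by
        rw [show glue a b ↑i = b i from dif_neg (Finset.mem_compl.mp i.prop)]
  exact congrArg₂ (· * ·) rfl h2

open Matrix

/-- For linearly independent `{ψ_i}` and a bipartition `{A, Aᶜ}` of the
variables, the separation rank of `f^θ` with respect to the bipartition — the minimal `r`
such that `f^θ = ∑_{j=1}^r u_j · w_j` with `u_j` depending only on variables in `A` and
`w_j` only on variables in `Aᶜ` — equals the rank of the matricization of `θ` grouping the
indices in `A` as rows and those in `Aᶜ` as columns. -/
theorem stmt15 (p d : ℕ) (ψ : Fin p → ℝ → ℝ) (hψ : LinearIndependent ℝ ψ)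
    (A : Finset (Fin d)) (θ : (Fin d → Fin p) → ℝ) :
    sInf {r : ℕ | ∃ u : Fin r → (↥A → ℝ) → ℝ,
        ∃ w : Fin r → (↥Aᶜ → ℝ) → ℝ,
        ∀ x : Fin d → ℝ,
          (∑ idx : Fin d → Fin p, θ idx * ∏ k : Fin d, ψ (idx k) (x k)) =
            ∑ j : Fin r, u j (fun i => x i) * w j (fun i => x i)} =
      (matricize p d A θ).rank := by
  classical
  obtain ⟨fs, G, hG⟩ := aux_dual ψ hψ
  set M := matricize p d A θ with hM
  -- membership of the rank in the set
  have hmem : M.rank ∈ {r : ℕ | ∃ u : Fin r → (↥A → ℝ) → ℝ,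
      ∃ w : Fin r → (↥Aᶜ → ℝ) → ℝ,
      ∀ x : Fin d → ℝ,
        (∑ idx : Fin d → Fin p, θ idx * ∏ k : Fin d, ψ (idx k) (x k)) =
          ∑ j : Fin r, u j (fun i => x i) * w j (fun i => x i)} := by
    set V := LinearMap.range M.mulVecLin with hV
    have hcol : ∀ b, (fun a => M a b) ∈ V := by
      intro b
      refine ⟨Pi.single b 1, ?_⟩
      funext a
      simp [Matrix.mulVecLin_apply, Matrix.mulVec_single]
    let β : Module.Basis (Fin M.rank) ℝ V := Module.finBasis ℝ V
    refine ⟨fun j y => ∑ a, (β j : (↥A → Fin p) → ℝ) a * ∏ i : ↥A, ψ (a i) (y i),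
            fun j z => ∑ b, β.repr (⟨fun a => M a b, hcol b⟩ : V) j * ∏ i : ↥Aᶜ, ψ (b i) (z i), ?_⟩
    intro x
    rw [aux_key p d ψ A θ x]
    have hMab : ∀ a b, M a b = ∑ j, β.repr (⟨fun a => M a b, hcol b⟩ : V) j * (β j : (↥A → Fin p) → ℝ) a := by
      intro a b
      have h6 := congrArg (fun v : V => (v : (↥A → Fin p) → ℝ) a) (β.sum_repr (⟨fun a => M a b, hcol b⟩ : V))
      simpa [-Module.Basis.sum_repr] using h6.symm
    calc ∑ a : ↥A → Fin p, ∑ b : ↥Aᶜ → Fin p, M a b *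
            ((∏ i : ↥A, ψ (a i) (x i)) * ∏ i : ↥Aᶜ, ψ (b i) (x i))
        = ∑ a : ↥A → Fin p, ∑ b : ↥Aᶜ → Fin p, ∑ j,
            (β.repr (⟨fun a => M a b, hcol b⟩ : V) j * (β j : (↥A → Fin p) → ℝ) a) *
            ((∏ i : ↥A, ψ (a i) (x i)) * ∏ i : ↥Aᶜ, ψ (b i) (x i)) := by
          refine Finset.sum_congr rfl fun a _ => Finset.sum_congr rfl fun b _ => ?_
          rw [hMab a b, Finset.sum_mul]
      _ = ∑ j : Fin M.rank, ∑ a : ↥A → Fin p, ∑ b : ↥Aᶜ → Fin p,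
            (β.repr (⟨fun a => M a b, hcol b⟩ : V) j * (β j : (↥A → Fin p) → ℝ) a) *
            ((∏ i : ↥A, ψ (a i) (x i)) * ∏ i : ↥Aᶜ, ψ (b i) (x i)) := by
          exact sum_comm3 (fun a b j =>
            (β.repr (⟨fun a => M a b, hcol b⟩ : V) j * (β j : (↥A → Fin p) → ℝ) a) *
            ((∏ i : ↥A, ψ (a i) (x i)) * ∏ i : ↥Aᶜ, ψ (b i) (x i)))
      _ = ∑ j : Fin M.rank, (∑ a, (β j : (↥A → Fin p) → ℝ) a * ∏ i : ↥A, ψ (a i) (x i)) *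
            (∑ b, β.repr (⟨fun a => M a b, hcol b⟩ : V) j * ∏ i : ↥Aᶜ, ψ (b i) (x i)) := by
          refine Finset.sum_congr rfl fun j _ => ?_
          rw [Finset.sum_mul_sum]
          exact Finset.sum_congr rfl fun a _ => Finset.sum_congr rfl fun b _ => by ring
  refine le_antisymm (Nat.sInf_le hmem) (le_csInf ⟨_, hmem⟩ ?_)
  rintro r ⟨u, w, hr⟩
  -- single-variable matrices
  let Pm : Matrix (Fin p) ↥fs ℝ := Matrix.of fun i j => ψ i ↑j
  let Eψ : Matrix ↥fs (Fin p) ℝ := Matrix.of fun j i => ψ i ↑j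
  have hGE : G * Eψ = 1 := by
    ext k i
    simpa [Matrix.mul_apply, Eψ] using hG k i
  have hPG : Pm * Gᵀ = 1 := by
    ext i k
    rw [Matrix.mul_apply]
    have h := hG k i
    rw [Matrix.one_apply] at h
    simp only [Pm, Matrix.of_apply, Matrix.transpose_apply]
    rw [show (∑ j : ↥fs, ψ i ↑j * G k j) = ∑ j : ↥fs, G k j * ψ i ↑j from
      Finset.sum_congr rfl fun j _ => mul_comm _ _, h, Matrix.one_apply]
    rcases eq_or_ne i k with rfl | hne
    · simp
    · simp [hne, hne.symm]
  -- grid matrices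
  let EA : Matrix (↥A → ↥fs) (↥A → Fin p) ℝ := Matrix.of fun y a => ∏ i, Eψ (y i) (a i)
  let HA : Matrix (↥A → Fin p) (↥A → ↥fs) ℝ := Matrix.of fun a y => ∏ i, G (a i) (y i)
  let FB : Matrix (↥Aᶜ → Fin p) (↥Aᶜ → ↥fs) ℝ := Matrix.of fun b z => ∏ i, Pm (b i) (z i)
  let KB : Matrix (↥Aᶜ → ↥fs) (↥Aᶜ → Fin p) ℝ := Matrix.of fun z b => ∏ i, Gᵀ (z i) (b i)
  have hHA : HA * EA = 1 := by
    rw [show HA * EA = Matrix.of fun a c => ∏ i, (G * Eψ) (a i) (c i) from grid_mul G Eψ, hGE,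
      grid_one]
  have hFB : FB * KB = 1 := by
    rw [show FB * KB = Matrix.of fun a c => ∏ i, (Pm * Gᵀ) (a i) (c i) from grid_mul Pm Gᵀ, hPG,
      grid_one]
  set N : Matrix (↥A → ↥fs) (↥Aᶜ → ↥fs) ℝ := EA * M * FB with hN
  have hMN : M = HA * (N * KB) := by
    have hassoc : HA * (N * KB) = (HA * EA) * M * (FB * KB) := by
      rw [hN]; simp only [Matrix.mul_assoc]
    rw [hassoc, hHA, hFB, Matrix.one_mul, Matrix.mul_one]
  let U : Matrix (↥A → ↥fs) (Fin r) ℝ := Matrix.of fun y j => u j (fun i => (y i : ℝ))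
  let W : Matrix (↥Aᶜ → ↥fs) (Fin r) ℝ := Matrix.of fun z j => w j (fun i => (z i : ℝ))
  have hNU : N = U * Wᵀ := by
    ext y z
    set x : Fin d → ℝ := fun k =>
      if h : k ∈ A then ((y ⟨k, h⟩ : ℝ)) else ((z ⟨k, Finset.mem_compl.mpr h⟩ : ℝ)) with hx
    have hxA : ∀ i : ↥A, x ↑i = (y i : ℝ) := fun i => dif_pos i.prop
    have hxB : ∀ i : ↥Aᶜ, x ↑i = (z i : ℝ) := fun i => dif_neg (Finset.mem_compl.mp i.prop)
    have heq := hr x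
    rw [aux_key p d ψ A θ x] at heq
    simp only [hxA, hxB] at heq
    calc N y z = ∑ b, (∑ a, EA y a * M a b) * FB b z := by
          simp [hN, Matrix.mul_apply]
      _ = ∑ a, ∑ b, M a b * ((∏ i : ↥A, ψ (a i) ((y i : ℝ))) *
            ∏ i : ↥Aᶜ, ψ (b i) ((z i : ℝ))) := by
          simp only [Finset.sum_mul]
          rw [Finset.sum_comm]
          refine Finset.sum_congr rfl fun a _ => Finset.sum_congr rfl fun b _ => ?_
          simp only [EA, FB, Eψ, Pm, Matrix.of_apply]
          ring
      _ = ∑ j, u j (fun i => (y i : ℝ)) * w j (fun i => (z i : ℝ)) := heq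
      _ = (U * Wᵀ) y z := by simp [Matrix.mul_apply, U, W]
  calc M.rank = (HA * (N * KB)).rank := by rw [← hMN]
    _ ≤ (N * KB).rank := Matrix.rank_mul_le_right _ _
    _ ≤ N.rank := Matrix.rank_mul_le_left _ _
    _ = (U * Wᵀ).rank := by rw [hNU]
    _ ≤ U.rank := Matrix.rank_mul_le_left _ _
    _ ≤ r := (Matrix.rank_le_card_width U).trans (by simp)
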